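/- Let H' be a finite nonempty set of hypotheses h : X → {0,1}, let ε > 0 and n ∈ ℕ, and define the exponential mechanism M that, on input a labeled dataset S ∈ (X×{0,1})^n, outputs each h ∈ H' with probability proportional to exp(−(ε·n/2)·ê(h; S)), where ê(h; S) is the empirical error of h on S. Then M is pure ε-differentially private: for every pair of datasets S, S' ∈ (X×{0,1})^n differing in exactly one entry and every h ∈ H', Pr[M(S) = h] ≤ e^ε·Pr[M(S') = h]. -/

import Mathlib

noncomputable section

/-- Two datasets differ in exactly one entry. -/
def Adjacent {Z : Type*} {n : ℕ} (S S' : Fin n → Z) : Prop :=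
  ∃ i : Fin n, S i ≠ S' i ∧ ∀ j : Fin n, j ≠ i → S j = S' j

/-- The empirical error of `h` on a labeled dataset `S`. -/
def empErr {X : Type*} {n : ℕ} (h : X → Bool) (S : Fin n → X × Bool) : ℝ :=
  (∑ i : Fin n, if h (S i).1 ≠ (S i).2 then (1 : ℝ) else 0) / n

/-- The probability that the exponential mechanism with score `-ê(·; S)` and privacy
parameter `ε` over the finite class `H'` outputs the hypothesis `h`: proportional
to `exp(-(ε n / 2) ê(h; S))`. -/
def expMechProb {X : Type*} {n : ℕ} (H' : Finset (X → Bool)) (ε : ℝ)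
    (S : Fin n → X × Bool) (h : X → Bool) : ℝ :=
  Real.exp (-(ε * n / 2) * empErr h S) /
    ∑ h' ∈ H', Real.exp (-(ε * n / 2) * empErr h' S)

private lemma empErr_sens {X : Type*} {n : ℕ} (h : X → Bool) (S S' : Fin n → X × Bool)
    (hadj : Adjacent S S') : empErr h S ≤ empErr h S' + 1 / n := by
  obtain ⟨i, _, hj⟩ := hadj
  have hn : (0:ℝ) < n := by exact_mod_cast i.pos
  have key : (∑ j : Fin n, if h (S j).1 ≠ (S j).2 then (1 : ℝ) else 0)
      ≤ (∑ j : Fin n, if h (S' j).1 ≠ (S' j).2 then (1 : ℝ) else 0) + 1 := by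
    rw [← Finset.add_sum_erase _ _ (Finset.mem_univ i),
        ← Finset.add_sum_erase _ (fun j => if h (S' j).1 ≠ (S' j).2 then (1:ℝ) else 0)
          (Finset.mem_univ i)]
    have hsum : (∑ j ∈ Finset.univ.erase i, if h (S j).1 ≠ (S j).2 then (1:ℝ) else 0)
        = ∑ j ∈ Finset.univ.erase i, if h (S' j).1 ≠ (S' j).2 then (1:ℝ) else 0 := by
      refine Finset.sum_congr rfl fun j hjmem => ?_
      rw [hj j (Finset.ne_of_mem_erase hjmem)]
    rw [hsum]
    have h1 : (if h (S i).1 ≠ (S i).2 then (1:ℝ) else 0) ≤ 1 := by split <;> norm_num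
    have h2 : (0:ℝ) ≤ (if h (S' i).1 ≠ (S' i).2 then (1:ℝ) else 0) := by positivity
    linarith
  unfold empErr
  rw [← add_div]
  gcongr

/-- **Privacy of the exponential mechanism** (Lemma 3.2 / KLNRS08): the exponential
mechanism over a finite nonempty class `H'` with score `-ê(·; S)` is pure
`ε`-differentially private: for adjacent datasets `S, S'` and every `h ∈ H'`,
`Pr[M(S) = h] ≤ e^ε Pr[M(S') = h]`. -/
theorem expMech_private {X : Type*} {n : ℕ} (H' : Finset (X → Bool))
    (hH' : H'.Nonempty) (ε : ℝ) (hε : 0 < ε)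
    (S S' : Fin n → X × Bool) (hadj : Adjacent S S') (h : X → Bool) (hh : h ∈ H') :
    expMechProb H' ε S h ≤ Real.exp ε * expMechProb H' ε S' h := by
  have hn : (0:ℝ) < n := by
    obtain ⟨i0, -, -⟩ := hadj
    exact_mod_cast i0.pos
  have hadj' : Adjacent S' S := by
    obtain ⟨i, hne, hj⟩ := hadj
    exact ⟨i, Ne.symm hne, fun j hji => (hj j hji).symm⟩
  -- pointwise bounds on exponentials
  have hexp : ∀ g : X → Bool, Real.exp (-(ε * n / 2) * empErr g S)
      ≤ Real.exp (ε / 2) * Real.exp (-(ε * n / 2) * empErr g S') := by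
    intro g
    rw [← Real.exp_add]
    apply Real.exp_le_exp.mpr
    have := empErr_sens g S' S hadj'
    have hc : ε * n / 2 * (1 / n) = ε / 2 := by field_simp
    nlinarith [mul_le_mul_of_nonneg_left this (by positivity : (0:ℝ) ≤ ε * n / 2)]
  have hexp' : ∀ g : X → Bool, Real.exp (-(ε * n / 2) * empErr g S')
      ≤ Real.exp (ε / 2) * Real.exp (-(ε * n / 2) * empErr g S) := by
    intro g
    rw [← Real.exp_add]
    apply Real.exp_le_exp.mpr
    have := empErr_sens g S S' hadj
    have hc : ε * n / 2 * (1 / n) = ε / 2 := by field_simp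
    nlinarith [mul_le_mul_of_nonneg_left this (by positivity : (0:ℝ) ≤ ε * n / 2)]
  set DS := ∑ h' ∈ H', Real.exp (-(ε * n / 2) * empErr h' S) with hDS
  set DS' := ∑ h' ∈ H', Real.exp (-(ε * n / 2) * empErr h' S') with hDS'
  have hDSpos : 0 < DS := Finset.sum_pos (fun g _ => Real.exp_pos _) hH'
  have hDS'pos : 0 < DS' := Finset.sum_pos (fun g _ => Real.exp_pos _) hH'
  have hDbound : DS' ≤ Real.exp (ε / 2) * DS := by
    rw [Finset.mul_sum]
    exact Finset.sum_le_sum fun g _ => hexp' g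
  unfold expMechProb
  rw [← hDS, ← hDS']
  have hnum : Real.exp (-(ε * n / 2) * empErr h S)
      ≤ Real.exp (ε / 2) * Real.exp (-(ε * n / 2) * empErr h S') := hexp h
  have key : Real.exp (-(ε * n / 2) * empErr h S) / DS
      ≤ (Real.exp (ε / 2) * Real.exp (-(ε * n / 2) * empErr h S')) / (DS' / Real.exp (ε / 2)) := by
    apply div_le_div₀ (by positivity) hnum (by positivity)
    rw [div_le_iff₀ (Real.exp_pos _)] at *
    calc DS' ≤ Real.exp (ε / 2) * DS := hDbound
      _ = DS * Real.exp (ε / 2) := mul_comm _ _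
  calc Real.exp (-(ε * n / 2) * empErr h S) / DS
      ≤ (Real.exp (ε / 2) * Real.exp (-(ε * n / 2) * empErr h S')) / (DS' / Real.exp (ε / 2)) := key
    _ = (Real.exp (ε / 2) * Real.exp (ε / 2)) * Real.exp (-(ε * n / 2) * empErr h S') / DS' := by
        rw [div_div_eq_mul_div]; ring
    _ = Real.exp ε * (Real.exp (-(ε * n / 2) * empErr h S') / DS') := by
        rw [← Real.exp_add, add_halves, mul_div_assoc]
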